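/- Let R = ℂ[x,x⁻¹,y,y⁻¹], let B ⊆ R be the ℂ-subspace spanned by the monomials xⁱyʲ with i ≥ 0 and j ∈ ℤ, and let n be an even natural number. Consider V′ = x⁻ⁿB/xB with the ℂ-bilinear pairing β′ induced by (f,g) ↦ x^{n−1}y⁻¹fg, valued in R/B. Then M = x^{1−n/2}B/xB is totally isotropic for β′, its orthogonal complement M^⊥ = {v ∈ V′ : β′(v,u) = 0 for all u ∈ M} equals x^{−n/2}B/xB, and the ℂ-linear map ℂ[y,y⁻¹] → M^⊥/M sending h to the class of x^{−n/2}h is bijective. -/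

import Mathlib

noncomputable section

/-- The Laurent polynomial ring `ℂ[x,x⁻¹,y,y⁻¹]` as the monoid algebra of `ℤ × ℤ` over `ℂ`. -/
abbrev LaurentR : Type := AddMonoidAlgebra ℂ (ℤ × ℤ)

/-- The monomial `xⁱyʲ`. -/
def mono (i j : ℤ) : LaurentR := AddMonoidAlgebra.single (i, j) 1

/-- `x` -/
def xx : LaurentR := mono 1 0
/-- `x⁻¹` -/
def xxInv : LaurentR := mono (-1) 0
/-- `y` -/
def yy : LaurentR := mono 0 1
/-- `y⁻¹` -/
def yyInv : LaurentR := mono 0 (-1)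

/-- `A = ℂ[x,y]`, the ℂ-subspace spanned by monomials `xⁱyʲ` with `i ≥ 0`, `j ≥ 0`. -/
def Asub : Submodule ℂ LaurentR := Submodule.span ℂ {r | ∃ (i : ℕ) (j : ℕ), r = mono i j}
/-- `B = ℂ[x,y,y⁻¹]`, the ℂ-subspace spanned by monomials `xⁱyʲ` with `i ≥ 0`, `j ∈ ℤ`. -/
def Bsub : Submodule ℂ LaurentR := Submodule.span ℂ {r | ∃ (i : ℕ) (j : ℤ), r = mono i j}
/-- `C = ℂ[x,x⁻¹,y]`, the ℂ-subspace spanned by monomials `xⁱyʲ` with `i ∈ ℤ`, `j ≥ 0`. -/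
def Csub : Submodule ℂ LaurentR := Submodule.span ℂ {r | ∃ (i : ℤ) (j : ℕ), r = mono i j}
/-- `ℂ[y,y⁻¹]`, the ℂ-subspace spanned by the monomials `yʲ`, `j ∈ ℤ`. -/
def Dy : Submodule ℂ LaurentR := Submodule.span ℂ {r | ∃ (j : ℤ), r = mono 0 j}
/-- `ℂ[x,x⁻¹]`, the ℂ-subspace spanned by the monomials `xⁱ`, `i ∈ ℤ`. -/
def Dx : Submodule ℂ LaurentR := Submodule.span ℂ {r | ∃ (i : ℤ), r = mono i 0}

/-- `u·L = {u·f : f ∈ L}` as a `ℂ`-submodule of `LaurentR`. -/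
def dil (u : LaurentR) (L : Submodule ℂ LaurentR) : Submodule ℂ LaurentR :=
  L.map (LinearMap.mulLeft ℂ u)

lemma mono_mul (i j i' j' : ℤ) : mono i j * mono i' j' = mono (i + i') (j + j') := by
  simp [mono, AddMonoidAlgebra.single_mul_single, Prod.mk_add_mk]

lemma mono_pow (k : ℕ) (i j : ℤ) : mono i j ^ k = mono (k * i) (k * j) := by
  simp [mono, AddMonoidAlgebra.single_pow, Prod.smul_mk, nsmul_eq_mul]

def supLev (a : ℤ) : Submodule ℂ LaurentR := AddMonoidAlgebra.supported ℂ ℂ {p : ℤ × ℤ | a ≤ p.1}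

lemma mem_supLev {a : ℤ} {f : LaurentR} : f ∈ supLev a ↔ ∀ p : ℤ × ℤ, f.coeff p ≠ 0 → a ≤ p.1 := by
  rw [supLev, AddMonoidAlgebra.mem_supported]
  simp [Set.subset_def, Finsupp.mem_support_iff]

lemma supLev_le {a b : ℤ} (h : a ≤ b) : supLev b ≤ supLev a :=
  AddMonoidAlgebra.supported_mono (fun p hp => le_trans h hp)

lemma mono_mem {a i j : ℤ} (h : a ≤ i) : mono i j ∈ supLev a := by
  rw [mem_supLev]
  intro p hp
  rcases eq_or_ne ((i, j) : ℤ × ℤ) p with rfl | hne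
  · exact h
  · exact absurd (Finsupp.single_eq_of_ne' hne) hp

lemma supLev_span (a : ℤ) :
    supLev a = Submodule.span ℂ {r : LaurentR | ∃ i j : ℤ, a ≤ i ∧ r = mono i j} := by
  rw [supLev, AddMonoidAlgebra.supported_eq_span_single]
  congr 1
  ext r
  constructor
  · rintro ⟨⟨i, j⟩, h, rfl⟩; exact ⟨i, j, h, rfl⟩
  · rintro ⟨i, j, h, rfl⟩; exact ⟨(i, j), h, rfl⟩

lemma Bsub_eq : Bsub = supLev 0 := by
  rw [Bsub, supLev_span]
  congr 1
  ext r
  constructor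
  · rintro ⟨i, j, rfl⟩; exact ⟨i, j, Int.ofNat_nonneg i, rfl⟩
  · rintro ⟨i, j, h, rfl⟩
    exact ⟨i.toNat, j, by rw [Int.toNat_of_nonneg h]⟩

lemma dil_mono (a : ℤ) : dil (mono a 0) Bsub = supLev a := by
  rw [dil, Bsub, Submodule.map_span, supLev_span]
  congr 1
  ext r
  constructor
  · rintro ⟨s, ⟨i, j, rfl⟩, rfl⟩
    exact ⟨a + i, j, le_add_of_nonneg_right (Int.ofNat_nonneg i), by
      rw [LinearMap.mulLeft_apply, mono_mul, zero_add]⟩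
  · rintro ⟨i, j, h, rfl⟩
    refine ⟨mono (i - a) j, ⟨(i - a).toNat, j, by rw [Int.toNat_of_nonneg (by omega)]⟩, ?_⟩
    rw [LinearMap.mulLeft_apply, mono_mul, zero_add]
    congr 1
    omega

lemma mul_mem_supLev {a b : ℤ} {f g : LaurentR} (hf : f ∈ supLev a) (hg : g ∈ supLev b) :
    f * g ∈ supLev (a + b) := by
  classical
  rw [mem_supLev] at hf hg ⊢
  intro p hp
  have hmem : p ∈ (f * g).coeff.support := Finsupp.mem_support_iff.mpr hp
  have := AddMonoidAlgebra.support_coeff_mul_subset f g hmem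
  rw [Finset.mem_add] at this
  obtain ⟨q, hq, s, hs, rfl⟩ := this
  have h1 := hf q (Finsupp.mem_support_iff.mp hq)
  have h2 := hg s (Finsupp.mem_support_iff.mp hs)
  have : (q + s).1 = q.1 + s.1 := rfl
  omega

lemma monoMul_apply (c d : ℤ) (f : LaurentR) (q : ℤ × ℤ) :
    (mono c d * f).coeff q = f.coeff (q.1 - c, q.2 - d) := by
  rw [mono, AddMonoidAlgebra.coeff_single_mul_apply, one_mul]
  congr 1
  simp [Prod.ext_iff]
  constructor <;> ring

lemma mem_Dy {h : LaurentR} : h ∈ Dy ↔ ∀ p : ℤ × ℤ, h.coeff p ≠ 0 → p.1 = 0 := by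
  have : Dy = AddMonoidAlgebra.supported ℂ ℂ {p : ℤ × ℤ | p.1 = 0} := by
    rw [Dy, AddMonoidAlgebra.supported_eq_span_single]
    congr 1
    ext r
    constructor
    · rintro ⟨j, rfl⟩; exact ⟨(0, j), rfl, rfl⟩
    · rintro ⟨⟨i, j⟩, h, rfl⟩
      exact ⟨j, by simp only [Set.mem_setOf_eq] at h; rw [mono]; cases h; rfl⟩
  rw [this, AddMonoidAlgebra.mem_supported]
  simp [Set.subset_def, Finsupp.mem_support_iff]

lemma one_eq_mono : (1 : LaurentR) = mono 0 0 := rfl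

/-- For `n` even, in `V' = x⁻ⁿB/xB` with the pairing `β'` induced by
`(f,g) ↦ x^{n-1}y⁻¹fg` (valued in `R/B`): the submodule `M = x^{1-n/2}B/xB` is totally
isotropic, its orthogonal complement equals `x^{-n/2}B/xB`, and the ℂ-linear map
`ℂ[y,y⁻¹] → M^⊥/M`, `h ↦ [x^{-n/2}h]`, is bijective (injective with range the image of the
lattice `x^{-n/2}B` in `R/x^{1-n/2}B`). Here `x^{1-n/2}` is written `x·x^{-n/2}` and
`x^{n-1}` is written `xⁿ·x⁻¹`. -/
theorem stmt_7 (n : ℕ) (hn : Even n) :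
    (∀ u ∈ dil (xx * xxInv ^ (n / 2)) Bsub, ∀ v ∈ dil (xx * xxInv ^ (n / 2)) Bsub,
        xx ^ n * xxInv * yyInv * (u * v) ∈ Bsub) ∧
    ({v : LaurentR | v ∈ dil (xxInv ^ n) Bsub ∧
        ∀ u ∈ dil (xx * xxInv ^ (n / 2)) Bsub, xx ^ n * xxInv * yyInv * (v * u) ∈ Bsub}
      = (dil (xxInv ^ (n / 2)) Bsub : Set LaurentR)) ∧
    Function.Injective (fun h : Dy =>
      (dil (xx * xxInv ^ (n / 2)) Bsub).mkQ (xxInv ^ (n / 2) * (h : LaurentR))) ∧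
    Set.range (fun h : Dy =>
      (dil (xx * xxInv ^ (n / 2)) Bsub).mkQ (xxInv ^ (n / 2) * (h : LaurentR)))
      = ((dil (xxInv ^ (n / 2)) Bsub).map (dil (xx * xxInv ^ (n / 2)) Bsub).mkQ :
          Set (LaurentR ⧸ dil (xx * xxInv ^ (n / 2)) Bsub)) := by
  classical
  obtain ⟨m, hm⟩ := hn
  have hdiv : n / 2 = m := by omega
  have hx2 : xxInv ^ (n / 2) = mono (-(m : ℤ)) 0 := by
    rw [hdiv, xxInv, mono_pow]; congr 1 <;> ring
  have hx1 : xx * xxInv ^ (n / 2) = mono (1 - (m : ℤ)) 0 := by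
    rw [hx2, xx, mono_mul]; congr 1 <;> ring
  have hxn : xxInv ^ n = mono (-(n : ℤ)) 0 := by
    rw [xxInv, mono_pow]; congr 1 <;> ring
  have hc : xx ^ n * xxInv * yyInv = mono ((n : ℤ) - 1) (-1) := by
    rw [xx, xxInv, yyInv, mono_pow, mono_mul, mono_mul]; congr 1 <;> ring
  have hM : dil (xx * xxInv ^ (n / 2)) Bsub = supLev (1 - (m : ℤ)) := by
    rw [hx1, dil_mono]
  have hW : dil (xxInv ^ (n / 2)) Bsub = supLev (-(m : ℤ)) := by
    rw [hx2, dil_mono]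
  have hN : dil (xxInv ^ n) Bsub = supLev (-(n : ℤ)) := by
    rw [hxn, dil_mono]
  have hnm : (n : ℤ) = m + m := by exact_mod_cast hm
  refine ⟨?_, ?_, ?_, ?_⟩
  · -- totally isotropic
    intro u hu v hv
    rw [hM] at hu hv
    rw [Bsub_eq, hc]
    exact supLev_le (by omega)
      (mul_mem_supLev (mono_mem le_rfl) (mul_mem_supLev hu hv))
  · -- orthogonal complement
    ext v
    simp only [Set.mem_setOf_eq, SetLike.mem_coe]
    rw [hM, hN, hW]
    constructor
    · rintro ⟨_, H⟩
      rw [mem_supLev]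
      rintro ⟨p1, p2⟩ hp
      have h2 := H (mono (1 - (m : ℤ)) 0) (mono_mem le_rfl)
      rw [Bsub_eq, hc, mem_supLev] at h2
      have key : (mono ((n : ℤ) - 1) (-1) * (v * mono (1 - (m : ℤ)) 0)).coeff
          (p1 + ((n : ℤ) - (m : ℤ)), p2 - 1) = v.coeff (p1, p2) := by
        rw [mul_comm v, monoMul_apply, monoMul_apply]
        congr 1
        simp only [Prod.mk.injEq]
        constructor <;> ring
      have := h2 _ (by rw [key]; exact hp)
      simp only at this
      omega
    · intro hv
      refine ⟨supLev_le (by omega) hv, ?_⟩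
      intro u hu
      rw [Bsub_eq, hc]
      exact supLev_le (by omega)
        (mul_mem_supLev (mono_mem le_rfl) (mul_mem_supLev hv hu))
  · -- injectivity
    intro h₁ h₂ heq
    simp only [Submodule.mkQ_apply] at heq
    rw [Submodule.Quotient.eq, ← mul_sub, hM, hx2] at heq
    have hd : ((h₁ : LaurentR) - h₂) ∈ Dy := sub_mem h₁.2 h₂.2
    have hzero : (h₁ : LaurentR) - h₂ = 0 := by
      by_contra hne
      obtain ⟨p, hp⟩ := Finsupp.ne_iff.mp (mt AddMonoidAlgebra.coeff_eq_zero.mp hne)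
      simp only [Finsupp.coe_zero, Pi.zero_apply] at hp
      have hp1 : p.1 = 0 := mem_Dy.mp hd p hp
      rw [mem_supLev] at heq
      have := heq ((-(m : ℤ)) + p.1, p.2) (by
        rw [monoMul_apply]
        simpa using hp)
      simp only at this
      omega
    exact Subtype.ext (sub_eq_zero.mp hzero)
  · -- range
    ext z
    simp only [Set.mem_range, Submodule.map_coe, Set.mem_image, SetLike.mem_coe]
    constructor
    · rintro ⟨h, rfl⟩
      refine ⟨xxInv ^ (n / 2) * (h : LaurentR), ?_, rfl⟩
      rw [hW, hx2, mem_supLev]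
      intro p hp
      rw [monoMul_apply] at hp
      have := mem_Dy.mp h.2 _ hp
      simp only at this
      omega
    · rintro ⟨v, hv, rfl⟩
      rw [hW] at hv
      set w : LaurentR := AddMonoidAlgebra.ofCoeff (Finsupp.filter (fun p : ℤ × ℤ => p.1 = -(m : ℤ)) v.coeff) with hwdef
      have hwapp : ∀ p : ℤ × ℤ, w.coeff p = if p.1 = -(m : ℤ)  then v.coeff p else 0 := by
        intro p; rw [hwdef, AddMonoidAlgebra.coeff_ofCoeff, Finsupp.filter_apply]
      set h : LaurentR := mono (m : ℤ) 0 * w with hhdef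
      have hhDy : h ∈ Dy := by
        rw [mem_Dy]
        intro q hq
        rw [hhdef, monoMul_apply] at hq
        have := hwapp (q.1 - (m : ℤ), q.2 - 0)
        simp only at this
        rw [this] at hq
        by_cases hc1 : q.1 - (m : ℤ) = -(m : ℤ)
        · omega
        · simp [hc1] at hq
      refine ⟨⟨h, hhDy⟩, ?_⟩
      simp only [Submodule.mkQ_apply]
      rw [Submodule.Quotient.eq, hM, hx2]
      have hmh : mono (-(m : ℤ)) 0 * h = w := by
        rw [hhdef, ← mul_assoc, mono_mul]
        norm_num [← one_eq_mono]
      rw [hmh, mem_supLev]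
      intro p hp
      have hsub : (w - v).coeff p = w.coeff p - v.coeff p := rfl
      rw [hsub, hwapp] at hp
      rw [mem_supLev] at hv
      by_cases hc1 : p.1 = -(m : ℤ)
      · simp [hc1] at hp
      · simp only [hc1, if_false, zero_sub, neg_ne_zero] at hp
        have := hv p hp
        omega
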